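/- arXiv:2403.12218 — 2 statements merged into one kernel-verified Lean document; each statement's English description precedes it below -/
import Mathlib

section
/- Let l be a list of real numbers of length n sorted in nondecreasing order, let f be a natural number with n ≥ 2f + 1, and let m ≤ M be real numbers. If at most f entries of l are strictly greater than M and at most f entries of l are strictly less than m, then every entry l[i] with index f ≤ i ≤ n − 1 − f satisfies m ≤ l[i] ≤ M. (Equivalently: after removing the f largest and f smallest values from a finite collection of real numbers in which at most f values exceed M and at most f values are below m, all remaining values lie in [m, M].) -/
/-- MSR trimming safety: if `l` is a nondecreasing list of reals of length
`n ≥ 2f + 1`, at most `f` of its entries are strictly greater than `M`, and at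
most `f` of its entries are strictly less than `m` (where `m ≤ M`), then every
entry with index `i` satisfying `f ≤ i ≤ n - 1 - f` lies in `[m, M]`. -/
theorem msr_trim_safety (l : List ℝ) (n f : ℕ) (hn : l.length = n)
    (hsorted : l.Pairwise (· ≤ ·)) (hnf : 2 * f + 1 ≤ n)
    (m M : ℝ) (hmM : m ≤ M)
    (habove : (l.filter (fun x => decide (M < x))).length ≤ f)
    (hbelow : (l.filter (fun x => decide (x < m))).length ≤ f) :
    ∀ i : ℕ, f ≤ i → i ≤ n - 1 - f →
      ∀ hi : i < l.length, m ≤ l.get ⟨i, hi⟩ ∧ l.get ⟨i, hi⟩ ≤ M := by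
  intro i hfi hinf hi
  have hmono : ∀ j k : ℕ, (hj : j < l.length) → (hk : k < l.length) → j ≤ k →
      l.get ⟨j, hj⟩ ≤ l.get ⟨k, hk⟩ := by
    intro j k hj hk hjk
    rcases eq_or_lt_of_le hjk with h | h
    · subst h; rfl
    · exact List.pairwise_iff_get.mp hsorted ⟨j, hj⟩ ⟨k, hk⟩ h
  constructor
  · by_contra h
    push_neg at h
    have hall : ∀ x ∈ l.take (i + 1), x < m := by
      intro x hx
      obtain ⟨j, hj, hje⟩ := List.mem_iff_getElem.mp hx
      have hj' : j < l.length := lt_of_lt_of_le hj (by rw [List.length_take]; exact min_le_right _ _)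
      have : x = l.get ⟨j, hj'⟩ := by
        rw [← hje]; simp [List.getElem_take]
      rw [this]
      have hji : j ≤ i := by
        have := hj; rw [List.length_take] at this; omega
      exact lt_of_le_of_lt (hmono j i hj' hi hji) h
    have hsub : ((l.take (i+1)).filter (fun x => decide (x < m))).length ≤
        (l.filter (fun x => decide (x < m))).length :=
      ((l.take_sublist (i+1)).filter _).length_le
    have heq : (l.take (i+1)).filter (fun x => decide (x < m)) = l.take (i+1) := by
      apply List.filter_eq_self.mpr
      intro x hx; simpa using hall x hx
    rw [heq, List.length_take] at hsub
    omega
  · by_contra h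
    push_neg at h
    have hall : ∀ x ∈ l.drop i, M < x := by
      intro x hx
      obtain ⟨j, hj, hje⟩ := List.mem_iff_getElem.mp hx
      rw [List.length_drop] at hj
      have hj' : i + j < l.length := by omega
      have : x = l.get ⟨i + j, hj'⟩ := by
        rw [← hje]; simp [List.getElem_drop]
      rw [this]
      exact lt_of_lt_of_le h (hmono i (i+j) hi hj' (by omega))
    have hsub : ((l.drop i).filter (fun x => decide (M < x))).length ≤
        (l.filter (fun x => decide (M < x))).length :=
      ((l.drop_sublist i).filter _).length_le
    have heq : (l.drop i).filter (fun x => decide (M < x)) = l.drop i := by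
      apply List.filter_eq_self.mpr
      intro x hx; simpa using hall x hx
    rw [heq, List.length_drop] at hsub
    omega
end

section
/- Let l be a list of real numbers of length n sorted in nondecreasing order, let f be a natural number with n ≥ 2f + 1, let m ≤ M be real numbers with at most f entries of l strictly greater than M and at most f entries strictly less than m, and let w ∈ [m, M]. Let J = {f, f+1, …, n−1−f} be the retained indices and let a₀ and (a_i)_{i∈J} be nonnegative weights summing to 1. Then the MSR update w' = a₀·w + Σ_{i∈J} a_i·l[i] satisfies m ≤ w' ≤ M. -/
/-- One-step safety of the MSR update: let `l` be a nondecreasing list of reals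
of length `n ≥ 2f + 1` in which at most `f` entries exceed `M` and at most `f`
entries are below `m` (with `m ≤ M`), and let `w ∈ [m, M]`. If `a₀` together
with weights `a i` over the retained indices `J = {f, …, n - 1 - f}` are
nonnegative and sum to `1`, then the MSR update
`w' = a₀ * w + ∑ i ∈ J, a i * l[i]` satisfies `m ≤ w' ≤ M`. -/
theorem msr_update_safety (l : List ℝ) (n f : ℕ) (hn : l.length = n)
    (hsorted : l.Pairwise (· ≤ ·)) (hnf : 2 * f + 1 ≤ n)
    (m M : ℝ) (hmM : m ≤ M)
    (habove : (l.filter (fun x => decide (M < x))).length ≤ f)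
    (hbelow : (l.filter (fun x => decide (x < m))).length ≤ f)
    (w : ℝ) (hw : m ≤ w ∧ w ≤ M)
    (a₀ : ℝ) (a : ℕ → ℝ) (ha₀ : 0 ≤ a₀)
    (ha : ∀ i ∈ Finset.Icc f (n - 1 - f), 0 ≤ a i)
    (hsum : a₀ + ∑ i ∈ Finset.Icc f (n - 1 - f), a i = 1) :
    m ≤ a₀ * w + ∑ i ∈ Finset.Icc f (n - 1 - f), a i * l.getD i 0 ∧
      a₀ * w + ∑ i ∈ Finset.Icc f (n - 1 - f), a i * l.getD i 0 ≤ M := by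
  -- boundedness of retained entries
  have hbound : ∀ i ∈ Finset.Icc f (n - 1 - f), m ≤ l.getD i 0 ∧ l.getD i 0 ≤ M := by
    intro i hi
    rw [Finset.mem_Icc] at hi
    obtain ⟨hif, hin⟩ := hi
    have hilt : i < l.length := by omega
    have hget : l.getD i 0 = l.get ⟨i, hilt⟩ := by
      rw [List.getD_eq_getElem?_getD, List.getElem?_eq_getElem hilt]; rfl
    rw [hget]
    constructor
    · -- lower bound: otherwise the first i+1 entries are < m
      by_contra h
      push_neg at h
      have hall : ∀ x ∈ l.take (i + 1), x < m := by
        intro x hx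
        obtain ⟨k, hxk⟩ := List.mem_iff_get.mp hx
        have hk' : (k : ℕ) < i + 1 := by
          have := k.isLt
          simp [List.length_take] at this
          omega
        have hkl : (k : ℕ) < l.length := by omega
        have hxval : x = l.get ⟨k, hkl⟩ := by
          rw [← hxk]; simp [List.get_eq_getElem, List.getElem_take]
        have hle : l.get ⟨k, hkl⟩ ≤ l.get ⟨i, hilt⟩ :=
          hsorted.rel_get_of_le (by simpa using Nat.lt_succ_iff.mp hk')
        rw [hxval]; exact lt_of_le_of_lt hle h
      have hfe : (l.take (i + 1)).filter (fun x => decide (x < m)) = l.take (i + 1) :=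
        List.filter_eq_self.mpr fun x hx => decide_eq_true (hall x hx)
      have hsub : ((l.take (i + 1)).filter (fun x => decide (x < m))).Sublist
          (l.filter (fun x => decide (x < m))) :=
        (List.take_sublist (i + 1) l).filter _
      have := hsub.length_le
      rw [hfe, List.length_take] at this
      omega
    · -- upper bound: otherwise the last n - i entries are > M
      by_contra h
      push_neg at h
      have hall : ∀ x ∈ l.drop i, M < x := by
        intro x hx
        obtain ⟨k, hxk⟩ := List.mem_iff_get.mp hx
        have hkl : i + (k : ℕ) < l.length := by
          have := k.isLt
          simp [List.length_drop] at this
          omega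
        have hxval : x = l.get ⟨i + k, hkl⟩ := by
          rw [← hxk]; simp only [List.get_eq_getElem, List.getElem_drop']
        have hle : l.get ⟨i, hilt⟩ ≤ l.get ⟨i + k, hkl⟩ :=
          hsorted.rel_get_of_le (by simp)
        rw [hxval]; exact lt_of_lt_of_le h hle
      have hfe : (l.drop i).filter (fun x => decide (M < x)) = l.drop i :=
        List.filter_eq_self.mpr fun x hx => decide_eq_true (hall x hx)
      have hsub : ((l.drop i).filter (fun x => decide (M < x))).Sublist
          (l.filter (fun x => decide (M < x))) :=
        (List.drop_sublist i l).filter _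
      have := hsub.length_le
      rw [hfe, List.length_drop] at this
      omega
  constructor
  · calc m = a₀ * m + ∑ i ∈ Finset.Icc f (n - 1 - f), a i * m := by
          rw [← Finset.sum_mul, ← add_mul, hsum, one_mul]
    _ ≤ a₀ * w + ∑ i ∈ Finset.Icc f (n - 1 - f), a i * l.getD i 0 := by
          gcongr a₀ * ?_ + ∑ i ∈ Finset.Icc f (n - 1 - f), ?_ with i hi
          · exact hw.1
          · exact mul_le_mul_of_nonneg_left (hbound i hi).1 (ha i hi)
  · calc a₀ * w + ∑ i ∈ Finset.Icc f (n - 1 - f), a i * l.getD i 0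
        ≤ a₀ * M + ∑ i ∈ Finset.Icc f (n - 1 - f), a i * M := by
          gcongr a₀ * ?_ + ∑ i ∈ Finset.Icc f (n - 1 - f), ?_ with i hi
          · exact hw.2
          · exact mul_le_mul_of_nonneg_left (hbound i hi).2 (ha i hi)
    _ = M := by rw [← Finset.sum_mul, ← add_mul, hsum, one_mul]
end
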